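/- Let k be a field, n ≥ 2, h ∈ k[X] with h(0) ≠ 0 and deg h < n, and R = k[X,Y,Z]/(XⁿY - Z² - h(X)Z). For any f ∈ k[X], the map E_f defined by E_f(x) = x, E_f(y) = y + 2f(x)z + xⁿf(x)² + f(x)h(x), E_f(z) = z + xⁿf(x) is a k-algebra automorphism of R. -/
import Mathlib

noncomputable section

/-- The defining relation `XⁿY - Z² - h(X)Z` in `k[X,Y,Z]` (variables `X 0, X 1, X 2`). -/
def danRel (k : Type*) [Field k] (n : ℕ) (h : Polynomial k) : MvPolynomial (Fin 3) k :=
  MvPolynomial.X 0 ^ n * MvPolynomial.X 1 - MvPolynomial.X 2 ^ 2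
    - Polynomial.aeval (MvPolynomial.X 0 : MvPolynomial (Fin 3) k) h * MvPolynomial.X 2

/-- The coordinate ring `R = k[X,Y,Z]/(XⁿY - Z² - h(X)Z)` of a Danielewski surface. -/
abbrev DanRing (k : Type*) [Field k] (n : ℕ) (h : Polynomial k) : Type _ :=
  MvPolynomial (Fin 3) k ⧸ Ideal.span {danRel k n h}

/-- The image `x` of `X` in `R`. -/
def dx (k : Type*) [Field k] (n : ℕ) (h : Polynomial k) : DanRing k n h :=
  Ideal.Quotient.mk _ (MvPolynomial.X 0)

/-- The image `y` of `Y` in `R`. -/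
def dy (k : Type*) [Field k] (n : ℕ) (h : Polynomial k) : DanRing k n h :=
  Ideal.Quotient.mk _ (MvPolynomial.X 1)

/-- The image `z` of `Z` in `R`. -/
def dz (k : Type*) [Field k] (n : ℕ) (h : Polynomial k) : DanRing k n h :=
  Ideal.Quotient.mk _ (MvPolynomial.X 2)

namespace DanAux

open MvPolynomial

variable {k : Type*} [Field k] (n : ℕ) (h f : Polynomial k)

def Pf (f : Polynomial k) : MvPolynomial (Fin 3) k := Polynomial.aeval (X 0) f

def Efun : Fin 3 → MvPolynomial (Fin 3) k :=
  ![X 0,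
    X 1 + 2 * Pf f * X 2 + X 0 ^ n * Pf f ^ 2 + Pf f * Pf h,
    X 2 + X 0 ^ n * Pf f]

def Ehom : MvPolynomial (Fin 3) k →ₐ[k] MvPolynomial (Fin 3) k := aeval (Efun n h f)

@[simp] lemma Ehom_X0 : Ehom n h f (X 0) = X 0 := by
  simp [Ehom, Efun]

@[simp] lemma Ehom_X1 :
    Ehom n h f (X 1) = X 1 + 2 * Pf f * X 2 + X 0 ^ n * Pf f ^ 2 + Pf f * Pf h := by
  simp [Ehom, Efun]

@[simp] lemma Ehom_X2 : Ehom n h f (X 2) = X 2 + X 0 ^ n * Pf f := by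
  simp [Ehom, Efun]

@[simp] lemma Ehom_Pf (g : Polynomial k) : Ehom n h f (Pf g) = Pf g := by
  rw [Pf, ← Polynomial.aeval_algHom_apply, Ehom_X0]

lemma Ehom_rel : Ehom n h f (danRel k n h) = danRel k n h := by
  have : (Polynomial.aeval (X 0 : MvPolynomial (Fin 3) k)) h = Pf h := rfl
  rw [danRel, this]
  simp only [map_sub, map_mul, map_pow, Ehom_X0, Ehom_X1, Ehom_X2, Ehom_Pf]
  ring

@[simp] lemma Pf_neg : Pf (-f) = -Pf f := by simp [Pf]

lemma Ehom_comp : (Ehom n h f).comp (Ehom n h (-f)) = AlgHom.id k _ := by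
  apply MvPolynomial.algHom_ext
  intro i
  fin_cases i
  · show (Ehom n h f) ((Ehom n h (-f)) (X 0)) = X 0
    simp
  · show (Ehom n h f) ((Ehom n h (-f)) (X 1)) = X 1
    simp only [Ehom_X1, Pf_neg, map_add, map_mul, map_pow, map_neg, map_ofNat, Ehom_X0,
      Ehom_X2, Ehom_Pf]
    ring
  · show (Ehom n h f) ((Ehom n h (-f)) (X 2)) = X 2
    simp only [Ehom_X2, Pf_neg, map_add, map_mul, map_pow, map_neg, Ehom_X0, Ehom_Pf]
    ring

def Equot : DanRing k n h →ₐ[k] DanRing k n h :=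
  Ideal.Quotient.liftₐ _ ((Ideal.Quotient.mkₐ k _).comp (Ehom n h f)) (by
    intro a ha
    obtain ⟨c, rfl⟩ := Ideal.mem_span_singleton'.mp ha
    simp only [AlgHom.comp_apply, map_mul, Ehom_rel, Ideal.Quotient.mkₐ_eq_mk]
    have h0 : (Ideal.Quotient.mk (Ideal.span {danRel k n h})) (danRel k n h) = 0 :=
      Ideal.Quotient.eq_zero_iff_mem.mpr (Ideal.subset_span rfl)
    rw [h0, mul_zero])

@[simp] lemma Equot_mk (a : MvPolynomial (Fin 3) k) :
    Equot n h f (Ideal.Quotient.mk _ a) = Ideal.Quotient.mk _ (Ehom n h f a) := rfl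

lemma Equot_comp : (Equot n h f).comp (Equot n h (-f)) = AlgHom.id k _ := by
  apply Ideal.Quotient.algHom_ext
  ext a
  simp only [AlgHom.comp_apply, Ideal.Quotient.mkₐ_eq_mk, Equot_mk, AlgHom.id_apply]
  rw [← AlgHom.comp_apply, Ehom_comp, AlgHom.id_apply]

def Eequiv : DanRing k n h ≃ₐ[k] DanRing k n h :=
  AlgEquiv.ofAlgHom (Equot n h f) (Equot n h (-f)) (Equot_comp n h f)
    (by have := Equot_comp n h (-f); rwa [neg_neg] at this)

@[simp] lemma Eequiv_apply (a : DanRing k n h) : Eequiv n h f a = Equot n h f a := rfl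

end DanAux

set_option synthInstance.maxHeartbeats 1000000 in
open DanAux in
/-- For any `f ∈ k[X]`, the map `E_f : x ↦ x`, `y ↦ y + 2f(x)z + xⁿf(x)² + f(x)h(x)`,
`z ↦ z + xⁿf(x)` is a `k`-algebra automorphism of `R`. -/
theorem stmt_12 (k : Type*) [Field k] (n : ℕ) (hn : 2 ≤ n)
    (h : Polynomial k) (h0 : h.coeff 0 ≠ 0) (hdeg : h.natDegree < n)
    (f : Polynomial k) :
    ∃ E : DanRing k n h ≃ₐ[k] DanRing k n h,
      E (dx k n h) = dx k n h ∧
      E (dy k n h) = dy k n h + 2 * Polynomial.aeval (dx k n h) f * dz k n h +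
        dx k n h ^ n * Polynomial.aeval (dx k n h) f ^ 2 +
        Polynomial.aeval (dx k n h) f * Polynomial.aeval (dx k n h) h ∧
      E (dz k n h) = dz k n h + dx k n h ^ n * Polynomial.aeval (dx k n h) f := by
  have mkPf : ∀ g : Polynomial k,
      Ideal.Quotient.mk (Ideal.span {danRel k n h}) (Pf g) = Polynomial.aeval (dx k n h) g := by
    intro g
    rw [dx, Pf, ← Ideal.Quotient.mkₐ_eq_mk k, ← Polynomial.aeval_algHom_apply]
  refine ⟨Eequiv n h f, ?_, ?_, ?_⟩
  · rw [dx, Eequiv_apply, Equot_mk, Ehom_X0]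
  · rw [dy, Eequiv_apply, Equot_mk, Ehom_X1]
    simp only [map_add, map_mul, map_pow, map_ofNat, mkPf]
    rfl
  · rw [dz, Eequiv_apply, Equot_mk, Ehom_X2]
    simp only [map_add, map_mul, map_pow, mkPf]
    rfl
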